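/- For i, j ∈ 𝒫 ∪ {0}: if it is not the case that i = 0 and j ∈ 𝒫, then every short exact sequence 0 → Δ(i) → E → Δ(j) → 0 of finite-dimensional left R-modules splits; whereas for every j ∈ 𝒫 the short exact sequence 0 → K·E_{n+1,j} → Re_j → Δ(j) → 0 is non-split and its kernel K·E_{n+1,j} is isomorphic to Δ(0) (so there is a non-split extension of Δ(j) by Δ(0)). -/

import Mathlib

open Matrix

set_option synthInstance.maxHeartbeats 1000000
set_option maxHeartbeats 2000000

/-- A finite poset structure on `{1,…,n}` (modeled as `Fin n`) whose order
relation refines the natural linear order. -/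
structure PosetOn (n : ℕ) where
  le : Fin n → Fin n → Prop
  le_refl : ∀ i, le i i
  le_trans : ∀ {i j k : Fin n}, le i j → le j k → le i k
  le_compat : ∀ {i j : Fin n}, le i j → i ≤ j

/-- The incidence algebra `K𝒫` as a set of `n × n` matrices. -/
def KPset (K : Type) [Field K] {n : ℕ} (P : PosetOn n) : Set (Matrix (Fin n) (Fin n) K) :=
  {M | ∀ j i, M j i ≠ 0 → P.le i j}

/-- The matrix model of the right Burt–Butler algebra: `(n+1) × (n+1)` matrices (indexed by
`Fin n ⊕ Unit`) whose upper-left `n × n` block is in `K𝒫` and upper-right block is zero. -/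
def RSet (K : Type) [Field K] {n : ℕ} (P : PosetOn n) :
    Set (Matrix (Fin n ⊕ Unit) (Fin n ⊕ Unit) K) :=
  {X | X.toBlocks₁₁ ∈ KPset K P ∧ X.toBlocks₁₂ = 0}

section GenericModules

variable {K : Type} [Field K] {A : Type} [Ring A] [Algebra K A] (e f : A)

/-- The left ideal `A e = {y ∈ A : y e = y}` (for `e` idempotent), as an `A`-submodule. -/
def leftIdeal (A : Type) [Ring A] (e : A) : Submodule A A where
  carrier := {y | y * e = y}
  add_mem' := by intro a b ha hb; show (a + b) * e = a + b; rw [add_mul, ha, hb]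
  zero_mem' := zero_mul e
  smul_mem' := by intro r y hy; show (r • y) * e = r • y; rw [smul_eq_mul, mul_assoc, hy]

/-- The cyclic submodule of `leftIdeal A e` generated by (elements equal to) `f`. -/
def cycSub (A : Type) [Ring A] (e f : A) : Submodule A ↥(leftIdeal A e) :=
  Submodule.span A {y : ↥(leftIdeal A e) | (y : A) = f}

/-- The quotient `(A e) / (A f)`; for the right Burt–Butler algebra this realizes the
standard modules `Δ(k) = Re_k / K·E_{n+1,k}`. -/
def DeltaGen (A : Type) [Ring A] (e f : A) : Type :=
  ↥(leftIdeal A e) ⧸ cycSub A e f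

noncomputable instance : AddCommGroup (DeltaGen A e f) :=
  inferInstanceAs (AddCommGroup (↥(leftIdeal A e) ⧸ cycSub A e f))

noncomputable instance : Module A (DeltaGen A e f) :=
  inferInstanceAs (Module A (↥(leftIdeal A e) ⧸ cycSub A e f))

noncomputable instance : Module K (DeltaGen A e f) :=
  inferInstanceAs (Module K (↥(leftIdeal A e) ⧸ cycSub A e f))

noncomputable instance : SMulCommClass A K (DeltaGen A e f) :=
  inferInstanceAs (SMulCommClass A K (↥(leftIdeal A e) ⧸ cycSub A e f))

/-- The canonical quotient map `Ae → (Ae)/(Af)`. -/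
noncomputable def deltaQuot (A : Type) [Ring A] (e f : A) :
    ↥(leftIdeal A e) →ₗ[A] DeltaGen A e f :=
  (cycSub A e f).mkQ

/-- The canonical inclusion of the cyclic submodule into `Ae`. -/
def cycInc (A : Type) [Ring A] (e f : A) : ↥(cycSub A e f) →ₗ[A] ↥(leftIdeal A e) :=
  (cycSub A e f).subtype

end GenericModules


section Helpers

variable {A : Type} [Ring A]

/-- The evaluation map `y ↦ y • x` on a left ideal. -/
def evalMap (e : A) {E : Type} [AddCommGroup E] [Module A E] (x : E) :
    ↥(leftIdeal A e) →ₗ[A] E where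
  toFun z := (z : A) • x
  map_add' := by
    intro a b
    show ((a : A) + (b : A)) • x = (a : A) • x + (b : A) • x
    rw [add_smul]
  map_smul' := by
    intro r z
    show ((r * (z : A))) • x = r • ((z : A) • x)
    rw [mul_smul]

lemma sec_of_idem (e : A) (he : e * e = e)
    {E : Type} [AddCommGroup E] [Module A E] (π : E →ₗ[A] ↥(leftIdeal A e))
    (hπ : Function.Surjective π) :
    ∃ s : ↥(leftIdeal A e) →ₗ[A] E, π ∘ₗ s = LinearMap.id := by
  obtain ⟨x, hx⟩ := hπ ⟨e, he⟩
  refine ⟨evalMap e x, ?_⟩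
  ext z
  simp only [LinearMap.comp_apply, LinearMap.id_apply, evalMap, LinearMap.coe_mk, AddHom.coe_mk]
  rw [_root_.map_smul, hx]
  show (z : A) • e = (z : A)
  rw [smul_eq_mul]; exact z.2

lemma sec_delta' (e f g : A) (hee : e * e = e) (hfe : f * e = f)
    (hgf : g * f = f)
    {E : Type} [AddCommGroup E] [Module A E]
    (π : E →ₗ[A] (↥(leftIdeal A e) ⧸ cycSub A e f))
    (hπ : Function.Surjective π) (hkill : ∀ w : E, π w = 0 → g • w = 0) :
    ∃ s : (↥(leftIdeal A e) ⧸ cycSub A e f) →ₗ[A] E, π ∘ₗ s = LinearMap.id := by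
  obtain ⟨x, hx⟩ := hπ ((cycSub A e f).mkQ ⟨e, hee⟩)
  have hmemf : f ∈ leftIdeal A e := hfe
  have hgFmem : (⟨f, hmemf⟩ : ↥(leftIdeal A e)) ∈ cycSub A e f := Submodule.subset_span rfl
  have hπfx : π (f • x) = 0 := by
    rw [_root_.map_smul, hx, ← _root_.map_smul]
    have h2 : (f • (⟨e, hee⟩ : ↥(leftIdeal A e))) = ⟨f, hmemf⟩ := by
      apply Subtype.ext
      show f • e = f
      rw [smul_eq_mul]; exact hfe
    rw [h2, Submodule.mkQ_apply, Submodule.Quotient.mk_eq_zero]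
    exact hgFmem
  have hfx : f • x = 0 := by
    have h := hkill (f • x) hπfx
    rwa [smul_smul, hgf] at h
  have hle : cycSub A e f ≤ LinearMap.ker (evalMap e x) := by
    rw [cycSub, Submodule.span_le]
    intro y hy
    have hyf : (y : A) = f := hy
    simp only [SetLike.mem_coe, LinearMap.mem_ker]
    show (y : A) • x = 0
    rw [hyf]; exact hfx
  refine ⟨Submodule.liftQ _ (evalMap e x) hle, ?_⟩
  apply LinearMap.ext
  intro v
  obtain ⟨y, rfl⟩ := Submodule.mkQ_surjective (cycSub A e f) v
  simp only [LinearMap.comp_apply, LinearMap.id_apply]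
  show π ((y : A) • x) = _
  rw [_root_.map_smul, hx, ← _root_.map_smul]
  congr 1
  apply Subtype.ext
  show (y : A) • e = (y : A)
  rw [smul_eq_mul]; exact y.2

end Helpers


set_option maxHeartbeats 8000000

/-- For `i, j ∈ 𝒫 ∪ {0}` with not (`i = 0` and `j ∈ 𝒫`), every short exact sequence
`0 → Δ(i) → E → Δ(j) → 0` of finite-dimensional left `R`-modules splits; whereas for `j ∈ 𝒫`
the sequence `0 → K·E_{n+1,j} → Re_j → Δ(j) → 0` is exact, non-split, and has kernel
isomorphic to `Δ(0) = Re₀`. -/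
theorem stmt18 {K : Type} [Field K] [IsAlgClosed K] {n : ℕ} (hn : 1 ≤ n) (P : PosetOn n)
    (R : Subalgebra K (Matrix (Fin n ⊕ Unit) (Fin n ⊕ Unit) K))
    (hR : (R : Set (Matrix (Fin n ⊕ Unit) (Fin n ⊕ Unit) K)) = RSet K P)
    (e0 : R) (he0 : (e0 : Matrix (Fin n ⊕ Unit) (Fin n ⊕ Unit) K)
      = Matrix.single (Sum.inr ()) (Sum.inr ()) 1)
    (ee : Fin n → R) (hee : ∀ k, (ee k : Matrix (Fin n ⊕ Unit) (Fin n ⊕ Unit) K)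
      = Matrix.single (Sum.inl k) (Sum.inl k) 1)
    (EE : Fin n → R) (hEE : ∀ k, (EE k : Matrix (Fin n ⊕ Unit) (Fin n ⊕ Unit) K)
      = Matrix.single (Sum.inr ()) (Sum.inl k) 1) :
    -- every short exact sequence `0 → Δ(i) → E → Δ(j) → 0` with `i, j ∈ 𝒫` splits
    (∀ i j : Fin n, ∀ (E : Type) (_ : AddCommGroup E) (_ : Module K E) (_ : Module R E)
      (_ : IsScalarTower K R E) (_ : FiniteDimensional K E)
      (ι : DeltaGen R (ee i) (EE i) →ₗ[R] E) (π : E →ₗ[R] DeltaGen R (ee j) (EE j)),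
      Function.Injective ι → Function.Surjective π → LinearMap.range ι = LinearMap.ker π →
      ∃ s : DeltaGen R (ee j) (EE j) →ₗ[R] E, π ∘ₗ s = LinearMap.id) ∧
    -- every short exact sequence `0 → Δ(i) → E → Δ(0) → 0` with `i ∈ 𝒫` splits
    (∀ i : Fin n, ∀ (E : Type) (_ : AddCommGroup E) (_ : Module K E) (_ : Module R E)
      (_ : IsScalarTower K R E) (_ : FiniteDimensional K E)
      (ι : DeltaGen R (ee i) (EE i) →ₗ[R] E) (π : E →ₗ[R] ↥(leftIdeal R e0)),
      Function.Injective ι → Function.Surjective π → LinearMap.range ι = LinearMap.ker π →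
      ∃ s : ↥(leftIdeal R e0) →ₗ[R] E, π ∘ₗ s = LinearMap.id) ∧
    -- every short exact sequence `0 → Δ(0) → E → Δ(0) → 0` splits
    (∀ (E : Type) (_ : AddCommGroup E) (_ : Module K E) (_ : Module R E)
      (_ : IsScalarTower K R E) (_ : FiniteDimensional K E)
      (ι : ↥(leftIdeal R e0) →ₗ[R] E) (π : E →ₗ[R] ↥(leftIdeal R e0)),
      Function.Injective ι → Function.Surjective π → LinearMap.range ι = LinearMap.ker π →
      ∃ s : ↥(leftIdeal R e0) →ₗ[R] E, π ∘ₗ s = LinearMap.id) ∧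
    -- for `j ∈ 𝒫` the sequence `0 → K·E_{n+1,j} → Re_j → Δ(j) → 0` is exact and non-split,
    -- with kernel isomorphic to `Δ(0) = Re₀`
    (∀ j : Fin n,
      Function.Injective (cycInc R (ee j) (EE j)) ∧
      Function.Surjective (deltaQuot R (ee j) (EE j)) ∧
      LinearMap.range (cycInc R (ee j) (EE j))
        = LinearMap.ker (deltaQuot R (ee j) (EE j)) ∧
      (¬ ∃ s : DeltaGen R (ee j) (EE j) →ₗ[R] ↥(leftIdeal R (ee j)),
        deltaQuot R (ee j) (EE j) ∘ₗ s = LinearMap.id) ∧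
      Nonempty (↥(cycSub R (ee j) (EE j)) ≃ₗ[R] ↥(leftIdeal R e0))) := by
  classical
  have f1 : e0 * e0 = e0 := by
    apply Subtype.ext
    show (e0 : Matrix (Fin n ⊕ Unit) (Fin n ⊕ Unit) K) * e0 = e0
    rw [he0]; simp
  have f2 : ∀ j, EE j * ee j = EE j := by
    intro j
    apply Subtype.ext
    show (EE j : Matrix (Fin n ⊕ Unit) (Fin n ⊕ Unit) K) * (ee j) = EE j
    rw [hEE, hee]; simp
  have f3 : ∀ j, e0 * EE j = EE j := by
    intro j
    apply Subtype.ext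
    show (e0 : Matrix (Fin n ⊕ Unit) (Fin n ⊕ Unit) K) * (EE j) = EE j
    rw [hEE, he0]; simp
  have f4 : ∀ j, ee j * ee j = ee j := by
    intro j
    apply Subtype.ext
    show (ee j : Matrix (Fin n ⊕ Unit) (Fin n ⊕ Unit) K) * (ee j) = ee j
    rw [hee]; simp
  have structR : ∀ r : R, ∀ a : Fin n,
      (r : Matrix (Fin n ⊕ Unit) (Fin n ⊕ Unit) K) (Sum.inl a) (Sum.inr ()) = 0 := by
    intro r a
    have hmem : (r : Matrix (Fin n ⊕ Unit) (Fin n ⊕ Unit) K) ∈ RSet K P := by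
      rw [← hR]; exact r.2
    have h3 := congrFun (congrFun hmem.2 a) ()
    simpa [Matrix.toBlocks₁₂] using h3
  have colLemma : ∀ (i : Fin n) (Y : Matrix (Fin n ⊕ Unit) (Fin n ⊕ Unit) K),
      Y * Matrix.single (Sum.inl i) (Sum.inl i) 1 = Y →
      ∀ a b, b ≠ Sum.inl i → Y a b = 0 := by
    intro i Y hY a b hb
    have h := Matrix.mul_single_apply_of_ne (1 : K) (Sum.inl i) (Sum.inl i)
      a b hb Y
    rw [hY] at h
    exact h
  have killLemma : ∀ (i : Fin n) (v : ↥(leftIdeal R (ee i)) ⧸ cycSub R (ee i) (EE i)),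
      e0 • v = 0 := by
    intro i v
    obtain ⟨y, rfl⟩ := Submodule.mkQ_surjective (cycSub R (ee i) (EE i)) v
    rw [← _root_.map_smul, Submodule.mkQ_apply, Submodule.Quotient.mk_eq_zero]
    have h4 : ((y : R) : Matrix (Fin n ⊕ Unit) (Fin n ⊕ Unit) K)
        * ((ee i : R) : Matrix (Fin n ⊕ Unit) (Fin n ⊕ Unit) K)
        = ((y : R) : Matrix (Fin n ⊕ Unit) (Fin n ⊕ Unit) K) := congrArg Subtype.val y.2
    rw [hee] at h4
    set c : K := ((y : R) : Matrix (Fin n ⊕ Unit) (Fin n ⊕ Unit) K) (Sum.inr ()) (Sum.inl i)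
      with hc
    have key : e0 • y = (algebraMap K R c) • (⟨EE i, f2 i⟩ : ↥(leftIdeal R (ee i))) := by
      apply Subtype.ext
      show (e0 : R) * (y : R) = (algebraMap K R c) * (EE i)
      apply Subtype.ext
      show (e0 : Matrix (Fin n ⊕ Unit) (Fin n ⊕ Unit) K)
          * ((y : R) : Matrix (Fin n ⊕ Unit) (Fin n ⊕ Unit) K)
          = (algebraMap K (Matrix (Fin n ⊕ Unit) (Fin n ⊕ Unit) K) c)
            * ((EE i : R) : Matrix (Fin n ⊕ Unit) (Fin n ⊕ Unit) K)
      rw [he0, hEE, ← Algebra.smul_def, Matrix.smul_single, smul_eq_mul, mul_one]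
      ext a b
      rcases a with a | a
      · simp
      · cases a
        rw [Matrix.single_mul_apply_same, one_mul]
        by_cases hb : b = Sum.inl i
        · subst hb
          rw [Matrix.single_apply_same]
        · rw [Matrix.single_apply_of_col_ne _ _ (Ne.symm hb)]
          exact colLemma i _ h4 _ _ hb
    rw [key]
    exact Submodule.smul_mem _ _ (Submodule.subset_span rfl)
  refine ⟨?_, ?_, ?_, ?_⟩
  · -- Ext¹(Δ(j), Δ(i)) = 0 for i, j ∈ 𝒫
    intro i j E iAG iMK iMR iTow iFin ι π hι hπ hrange
    letI := iAG; letI := iMR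
    have hkill : ∀ w : E, π w = 0 → (e0 : R) • w = 0 := by
      intro w hw
      have hwker : w ∈ LinearMap.ker π := hw
      rw [← hrange] at hwker
      obtain ⟨v, rfl⟩ := hwker
      exact ((map_smul ι e0 v).symm.trans (congrArg ι (killLemma i v))).trans (map_zero ι)
    exact sec_delta' (ee j) (EE j) e0 (f4 j) (f2 j) (f3 j) π hπ hkill
  · -- Δ(0) is projective: sections exist
    intro i E iAG iMK iMR iTow iFin ι π hι hπ hrange
    letI := iAG; letI := iMR
    exact sec_of_idem e0 f1 π hπ
  · intro E iAG iMK iMR iTow iFin ι π hι hπ hrange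
    letI := iAG; letI := iMR
    exact sec_of_idem e0 f1 π hπ
  · -- the non-split sequence
    intro j
    have hgFmem : (⟨EE j, f2 j⟩ : ↥(leftIdeal R (ee j))) ∈ cycSub R (ee j) (EE j) :=
      Submodule.subset_span rfl
    have setEq : {y : ↥(leftIdeal R (ee j)) | (y : R) = EE j}
        = {(⟨EE j, f2 j⟩ : ↥(leftIdeal R (ee j)))} := by
      ext y
      constructor
      · intro hy; exact Subtype.ext hy
      · intro hy; rw [hy]; rfl
    have memB : ∀ w : ↥(leftIdeal R (ee j)), w ∈ cycSub R (ee j) (EE j) →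
        ∃ c : K, ((w : R) : Matrix (Fin n ⊕ Unit) (Fin n ⊕ Unit) K)
          = c • Matrix.single (Sum.inr ()) (Sum.inl j) (1 : K) := by
      intro w hw
      have hw2 : w ∈ Submodule.span R ({(⟨EE j, f2 j⟩ : ↥(leftIdeal R (ee j)))} :
          Set ↥(leftIdeal R (ee j))) := by
        rw [← setEq]; exact hw
      obtain ⟨r, hr⟩ := Submodule.mem_span_singleton.mp hw2
      refine ⟨((r : Matrix (Fin n ⊕ Unit) (Fin n ⊕ Unit) K) (Sum.inr ()) (Sum.inr ())), ?_⟩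
      have hcoe : ((w : R) : Matrix (Fin n ⊕ Unit) (Fin n ⊕ Unit) K)
          = (r : Matrix (Fin n ⊕ Unit) (Fin n ⊕ Unit) K)
            * ((EE j : R) : Matrix (Fin n ⊕ Unit) (Fin n ⊕ Unit) K) := by
        rw [← hr]; rfl
      rw [hcoe, hEE, Matrix.smul_single, smul_eq_mul, mul_one]
      ext a b
      by_cases hb : b = Sum.inl j
      · subst hb
        rw [Matrix.mul_single_apply_same, mul_one]
        rcases a with a | a
        · rw [structR, Matrix.single_apply_of_row_ne (by simp)]
        · cases a
          rw [Matrix.single_apply_same]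
      · rw [Matrix.single_apply_of_col_ne _ _ (Ne.symm hb)]
        simp [hb]
    refine ⟨Submodule.injective_subtype _, Submodule.mkQ_surjective _, ?_, ?_, ?_⟩
    · show LinearMap.range ((cycSub R (ee j) (EE j)).subtype)
        = LinearMap.ker ((cycSub R (ee j) (EE j)).mkQ)
      rw [Submodule.range_subtype, Submodule.ker_mkQ]
    · rintro ⟨s, hs⟩
      have e1 : EE j • (deltaQuot R (ee j) (EE j) ⟨ee j, f4 j⟩)
          = deltaQuot R (ee j) (EE j) ⟨EE j, f2 j⟩ := by
        rw [← _root_.map_smul]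
        congr 1
        exact Subtype.ext (f2 j)
      have e2 : deltaQuot R (ee j) (EE j) ⟨EE j, f2 j⟩ = 0 :=
        (Submodule.Quotient.mk_eq_zero _).mpr hgFmem
      have h1 : EE j • (s (deltaQuot R (ee j) (EE j) ⟨ee j, f4 j⟩)) = 0 :=
        ((map_smul s (EE j) (deltaQuot R (ee j) (EE j) ⟨ee j, f4 j⟩)).symm.trans
          ((congrArg s (e1.trans e2)).trans (map_zero s)))
      have h3 : deltaQuot R (ee j) (EE j) (s (deltaQuot R (ee j) (EE j) ⟨ee j, f4 j⟩))
          = deltaQuot R (ee j) (EE j) ⟨ee j, f4 j⟩ := LinearMap.congr_fun hs _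
      have hzge : s (deltaQuot R (ee j) (EE j) ⟨ee j, f4 j⟩) - ⟨ee j, f4 j⟩
          ∈ cycSub R (ee j) (EE j) := (Submodule.Quotient.eq _).mp h3
      obtain ⟨c, hc⟩ := memB _ hzge
      have hsub : (((s (deltaQuot R (ee j) (EE j) ⟨ee j, f4 j⟩) : ↥(leftIdeal R (ee j))) : R)
            : Matrix (Fin n ⊕ Unit) (Fin n ⊕ Unit) K)
          - ((ee j : R) : Matrix (Fin n ⊕ Unit) (Fin n ⊕ Unit) K)
          = c • Matrix.single (Sum.inr ()) (Sum.inl j) (1 : K) := by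
        rw [← hc]; rfl
      have hzc : (((s (deltaQuot R (ee j) (EE j) ⟨ee j, f4 j⟩) : ↥(leftIdeal R (ee j))) : R)
            : Matrix (Fin n ⊕ Unit) (Fin n ⊕ Unit) K)
          = Matrix.single (Sum.inl j) (Sum.inl j) 1
            + c • Matrix.single (Sum.inr ()) (Sum.inl j) (1 : K) := by
        rw [← hsub, hee]
        abel
      have h1' : ((EE j : R) : Matrix (Fin n ⊕ Unit) (Fin n ⊕ Unit) K)
          * (((s (deltaQuot R (ee j) (EE j) ⟨ee j, f4 j⟩) : ↥(leftIdeal R (ee j))) : R)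
            : Matrix (Fin n ⊕ Unit) (Fin n ⊕ Unit) K) = 0 :=
        congrArg (fun w : ↥(leftIdeal R (ee j)) =>
          ((w : R) : Matrix (Fin n ⊕ Unit) (Fin n ⊕ Unit) K)) h1
      have hEEsq : (Matrix.single (Sum.inr ()) (Sum.inl j) (1 : K)
            : Matrix (Fin n ⊕ Unit) (Fin n ⊕ Unit) K)
          * (Matrix.single (Sum.inr ()) (Sum.inl j) (1 : K)
            : Matrix (Fin n ⊕ Unit) (Fin n ⊕ Unit) K) = 0 :=
        Matrix.single_mul_single_of_ne (1 : K) (Sum.inr () : Fin n ⊕ Unit) (Sum.inl j)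
          (Sum.inr ()) (by simp) (1 : K)
      rw [hzc, hEE j, mul_add, Matrix.mul_smul, Matrix.single_mul_single_same, one_mul,
        hEEsq, smul_zero, add_zero] at h1'
      have := congrFun (congrFun h1' (Sum.inr ())) (Sum.inl j)
      simp at this
    · -- the kernel is isomorphic to Δ(0)
      have structZ : ∀ z : ↥(leftIdeal R e0),
          ((z : R) : Matrix (Fin n ⊕ Unit) (Fin n ⊕ Unit) K)
          = (((z : R) : Matrix (Fin n ⊕ Unit) (Fin n ⊕ Unit) K) (Sum.inr ()) (Sum.inr ()))
            • Matrix.single (Sum.inr ()) (Sum.inr ()) (1 : K) := by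
        intro z
        have h4 : ((z : R) : Matrix (Fin n ⊕ Unit) (Fin n ⊕ Unit) K)
            * ((e0 : R) : Matrix (Fin n ⊕ Unit) (Fin n ⊕ Unit) K)
            = ((z : R) : Matrix (Fin n ⊕ Unit) (Fin n ⊕ Unit) K) := congrArg Subtype.val z.2
        rw [he0] at h4
        rw [Matrix.smul_single, smul_eq_mul, mul_one]
        ext a b
        rcases b with b | b
        · rw [Matrix.single_apply_of_col_ne _ _ (by simp)]
          have h := Matrix.mul_single_apply_of_ne (1 : K) (Sum.inr ())
            (Sum.inr () : Fin n ⊕ Unit) a (Sum.inl b) (by simp)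
            ((z : R) : Matrix (Fin n ⊕ Unit) (Fin n ⊕ Unit) K)
          rw [h4] at h
          exact h
        · cases b
          have h := Matrix.mul_single_apply_same (1 : K) (Sum.inr ())
            (Sum.inr () : Fin n ⊕ Unit) a
            ((z : R) : Matrix (Fin n ⊕ Unit) (Fin n ⊕ Unit) K)
          rw [h4, mul_one] at h
          rcases a with a | a
          · rw [h, structR, Matrix.single_apply_of_row_ne (by simp)]
          · cases a
            rw [h, Matrix.single_apply_same]
      let ψ : ↥(leftIdeal R e0) →ₗ[R] ↥(cycSub R (ee j) (EE j)) :=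
        LinearMap.codRestrict (cycSub R (ee j) (EE j))
          (evalMap e0 (⟨EE j, f2 j⟩ : ↥(leftIdeal R (ee j))))
          (fun z => Submodule.smul_mem _ _ hgFmem)
      have hker : ∀ z : ↥(leftIdeal R e0), ψ z = 0 → z = 0 := by
        intro z hz
        have hz2 : ((z : R) : Matrix (Fin n ⊕ Unit) (Fin n ⊕ Unit) K)
            * ((EE j : R) : Matrix (Fin n ⊕ Unit) (Fin n ⊕ Unit) K) = 0 :=
          congrArg (fun w : ↥(cycSub R (ee j) (EE j)) =>
            (((w : ↥(leftIdeal R (ee j))) : R) : Matrix (Fin n ⊕ Unit) (Fin n ⊕ Unit) K)) hz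
        rw [structZ z, hEE, smul_mul_assoc, Matrix.single_mul_single_same, one_mul] at hz2
        have hc0 : ((z : R) : Matrix (Fin n ⊕ Unit) (Fin n ⊕ Unit) K)
            (Sum.inr ()) (Sum.inr ()) = 0 := by
          have h := congrFun (congrFun hz2 (Sum.inr ())) (Sum.inl j)
          simpa using h
        apply Subtype.ext
        apply Subtype.ext
        show ((z : R) : Matrix (Fin n ⊕ Unit) (Fin n ⊕ Unit) K) = 0
        rw [structZ z, hc0, zero_smul]
      have hinj : Function.Injective ψ := by
        intro a b hab
        have h0 : ψ (a - b) = 0 := by rw [map_sub, hab, sub_self]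
        exact sub_eq_zero.mp (hker (a - b) h0)
      have hsurj : Function.Surjective ψ := by
        intro w
        have hw2 : (w : ↥(leftIdeal R (ee j)))
            ∈ Submodule.span R ({(⟨EE j, f2 j⟩ : ↥(leftIdeal R (ee j)))} :
              Set ↥(leftIdeal R (ee j))) := by
          rw [← setEq]; exact w.2
        obtain ⟨r, hr⟩ := Submodule.mem_span_singleton.mp hw2
        refine ⟨⟨r * e0, ?_⟩, ?_⟩
        · show (r * e0) * e0 = r * e0
          rw [mul_assoc, f1]
        · apply Subtype.ext
          show ((r * e0 : R)) • (⟨EE j, f2 j⟩ : ↥(leftIdeal R (ee j)))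
            = (w : ↥(leftIdeal R (ee j)))
          rw [mul_smul, ← hr]
          congr 1
          apply Subtype.ext
          show e0 * EE j = EE j
          exact f3 j
      exact ⟨(LinearEquiv.ofBijective ψ ⟨hinj, hsurj⟩).symm⟩
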